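/- If η is distributed according to the invariant measure ν_N of the complete graph Fleming-Viot process, then E_{ν_N}[d_TV(m(η), π_K)] ≤ √(K(p+1)/N), where π_K is the uniform distribution on {1,…,K}. -/

import Mathlib

/-- The unnormalized reversible weight `∏_{i=1}^K ∏_{j=0}^{η(i)-1} (N-1+Kpj)/(j+1)`. -/
noncomputable def cgWeight (K N : ℕ) (p : ℝ) (η : Fin K → ℕ) : ℝ :=
  ∏ i, ∏ j ∈ Finset.range (η i), (((N : ℝ) - 1 + K * p * j) / (j + 1))

/-- Expectation of `f` under the normalized reversible measure `ν_N`. -/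
noncomputable def cgExp (K N : ℕ) (p : ℝ) (f : (Fin K → ℕ) → ℝ) : ℝ :=
  (∑ η ∈ Finset.Nat.antidiagonalTuple K N, cgWeight K N p η * f η) /
    (∑ η ∈ Finset.Nat.antidiagonalTuple K N, cgWeight K N p η)


open Finset

/-- single-site weight -/
noncomputable def aW (K N : ℕ) (p : ℝ) (n : ℕ) : ℝ :=
  ∏ j ∈ Finset.range n, (((N : ℝ) - 1 + K * p * j) / (j + 1))

variable {K N : ℕ} {p : ℝ}

lemma factor_pos (hN : 2 ≤ N) (hp : 0 < p) (j : ℕ) :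
    0 < ((N : ℝ) - 1 + K * p * j) := by
  have : (2:ℝ) ≤ N := by exact_mod_cast hN
  have : (0:ℝ) ≤ (K:ℝ) * p * j := by positivity
  linarith

lemma aW_pos (hN : 2 ≤ N) (hp : 0 < p) (n : ℕ) : 0 < aW K N p n := by
  apply Finset.prod_pos
  intro j _
  exact div_pos (factor_pos hN hp j) (by positivity)

lemma aW_succ (n : ℕ) :
    aW K N p (n + 1) = aW K N p n * (((N : ℝ) - 1 + K * p * n) / (n + 1)) :=
  Finset.prod_range_succ _ n

lemma cgWeight_eq_prod_aW (η : Fin K → ℕ) :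
    cgWeight K N p η = ∏ i, aW K N p (η i) := rfl

lemma cgWeight_pos (hN : 2 ≤ N) (hp : 0 < p) (η : Fin K → ℕ) :
    0 < cgWeight K N p η := by
  rw [cgWeight_eq_prod_aW]
  exact Finset.prod_pos fun i _ => aW_pos hN hp _

/-- weight after a two-site update -/
lemma cgWeight_update {k l : Fin K} (hkl : k ≠ l) (η : Fin K → ℕ) (u v : ℕ) :
    cgWeight K N p (Function.update (Function.update η k u) l v)
      * aW K N p (η k) * aW K N p (η l)
    = cgWeight K N p η * aW K N p u * aW K N p v := by
  rw [cgWeight_eq_prod_aW, cgWeight_eq_prod_aW]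
  have h1 : ∀ i, aW K N p (Function.update (Function.update η k u) l v i)
      = Function.update (Function.update (fun j => aW K N p (η j)) k (aW K N p u)) l (aW K N p v) i := by
    intro i
    by_cases hil : i = l
    · subst hil; simp
    · by_cases hik : i = k
      · subst hik; simp [Function.update_of_ne hil, Function.update_of_ne hkl]
      · simp [Function.update_of_ne hil, Function.update_of_ne hik]
  rw [Finset.prod_congr rfl (fun i _ => h1 i)]
  rw [Finset.prod_update_of_mem (Finset.mem_univ l)]
  simp only [← Finset.erase_eq]
  rw [Finset.prod_update_of_mem (Finset.mem_erase.mpr ⟨hkl, Finset.mem_univ k⟩)]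
  rw [← Finset.mul_prod_erase Finset.univ _ (Finset.mem_univ l),
    ← Finset.mul_prod_erase _ _ (Finset.mem_erase.mpr ⟨hkl, Finset.mem_univ k⟩)]
  simp only [← Finset.erase_eq]
  ring
lemma cgWeight_comp (σ : Equiv.Perm (Fin K)) (η : Fin K → ℕ) :
    cgWeight K N p (η ∘ σ) = cgWeight K N p η := by
  rw [cgWeight_eq_prod_aW, cgWeight_eq_prod_aW]
  exact Equiv.prod_comp σ (fun i => aW K N p (η i))

lemma sum_comp_perm (σ : Equiv.Perm (Fin K)) (F : (Fin K → ℕ) → ℝ) :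
    ∑ η ∈ Finset.Nat.antidiagonalTuple K N, cgWeight K N p η * F (η ∘ σ)
      = ∑ η ∈ Finset.Nat.antidiagonalTuple K N, cgWeight K N p η * F η := by
  apply Finset.sum_nbij' (i := fun η => η ∘ σ) (j := fun η => η ∘ σ.symm)
  · intro η hη
    rw [Finset.Nat.mem_antidiagonalTuple] at hη ⊢
    rw [← hη]; exact Equiv.sum_comp σ η
  · intro η hη
    rw [Finset.Nat.mem_antidiagonalTuple] at hη ⊢
    rw [← hη]; exact Equiv.sum_comp σ.symm η
  · intro η _; funext i; simp
  · intro η _; funext i; simp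
  · intro η _
    rw [cgWeight_comp]

lemma sum_single_swap (g : ℕ → ℝ) (k k' : Fin K) :
    ∑ η ∈ Finset.Nat.antidiagonalTuple K N, cgWeight K N p η * g (η k)
      = ∑ η ∈ Finset.Nat.antidiagonalTuple K N, cgWeight K N p η * g (η k') := by
  have := sum_comp_perm (K := K) (N := N) (p := p) (Equiv.swap k k') (fun η => g (η k'))
  simpa using this

lemma sum_update_update {k l : Fin K} (hkl : k ≠ l) (η : Fin K → ℕ) (u v : ℕ) :
    (∑ i, Function.update (Function.update η k u) l v i) + η k + η l
      = (∑ i, η i) + u + v := by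
  have h1 : ∀ i, Function.update (Function.update η k u) l v i
      = Function.update (Function.update η k u) l v i := fun _ => rfl
  rw [Finset.sum_update_of_mem (Finset.mem_univ l)]
  simp only [← Finset.erase_eq]
  rw [Finset.sum_update_of_mem (Finset.mem_erase.mpr ⟨hkl, Finset.mem_univ k⟩)]
  rw [← Finset.add_sum_erase Finset.univ _ (Finset.mem_univ l),
    ← Finset.add_sum_erase _ _ (Finset.mem_erase.mpr ⟨hkl, Finset.mem_univ k⟩)]
  simp only [← Finset.erase_eq]
  ring
lemma aW_succ' (n : ℕ) :
    aW K N p (n + 1) * ((n : ℝ) + 1) = aW K N p n * (((N : ℝ) - 1 + K * p * n)) := by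
  rw [aW_succ]
  have : ((n : ℝ) + 1) ≠ 0 := by positivity
  field_simp

lemma key_term (hN : 2 ≤ N) (hp : 0 < p) {k l : Fin K} (hkl : k ≠ l)
    (η : Fin K → ℕ) (hη : η k ≠ 0) :
    cgWeight K N p η * (((η k : ℝ)) ^ 2 * ((N : ℝ) - 1 + K * p * (η l)))
      = cgWeight K N p (Function.update (Function.update η k (η k - 1)) l (η l + 1)) *
        (((N : ℝ) - 1 + K * p *
            ((Function.update (Function.update η k (η k - 1)) l (η l + 1)) k)) *
          ((Function.update (Function.update η k (η k - 1)) l (η l + 1)) l : ℝ) *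
          (((Function.update (Function.update η k (η k - 1)) l (η l + 1)) k : ℝ) + 1)) := by
  obtain ⟨m, hm⟩ : ∃ m, η k = m + 1 := ⟨η k - 1, (Nat.succ_pred_eq_of_pos (Nat.pos_of_ne_zero hη)).symm⟩
  have hupk : (Function.update (Function.update η k (η k - 1)) l (η l + 1)) k = m := by
    rw [Function.update_of_ne hkl, Function.update_self, hm]
    omega
  have hupl : (Function.update (Function.update η k (η k - 1)) l (η l + 1)) l = η l + 1 := by
    rw [Function.update_self]
  rw [hupk, hupl]
  have hw := cgWeight_update (N := N) (p := p) hkl η (η k - 1) (η l + 1)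
  rw [hm] at hw
  simp only [Nat.add_sub_cancel] at hw
  have e1 := aW_succ' (K := K) (N := N) (p := p) m
  have e2 := aW_succ' (K := K) (N := N) (p := p) (η l)
  set W := cgWeight K N p η
  set Wφ := cgWeight K N p (Function.update (Function.update η k m) l (η l + 1))
  have hA : (0:ℝ) < aW K N p m := aW_pos hN hp m
  have hB : (0:ℝ) < aW K N p (η l) := aW_pos hN hp (η l)
  have hcancel : (Wφ * (((N : ℝ) - 1 + K * p * m) * ((η l : ℝ) + 1) * ((m : ℝ) + 1)))
        * (aW K N p m * aW K N p (η l))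
      = (W * (((m : ℝ) + 1) ^ 2 * ((N : ℝ) - 1 + K * p * (η l))))
        * (aW K N p m * aW K N p (η l)) := by
    linear_combination (((m : ℝ) + 1)^2 * ((η l : ℝ) + 1)) * hw
      - (Wφ * aW K N p (η l) * ((η l : ℝ) + 1) * ((m : ℝ) + 1)) * e1
      + (W * aW K N p m * ((m : ℝ) + 1)^2) * e2
  have hne : aW K N p m * aW K N p (η l) ≠ 0 := by positivity
  have hmain := mul_right_cancel₀ hne hcancel
  have hmcast : ((η k : ℝ)) = (m : ℝ) + 1 := by rw [hm]; push_cast; ring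
  rw [hm]
  push_cast
  linarith [hmain]
lemma key_sum (hN : 2 ≤ N) (hp : 0 < p) {k l : Fin K} (hkl : k ≠ l) :
    ∑ η ∈ Finset.Nat.antidiagonalTuple K N,
        cgWeight K N p η * (((η k : ℝ)) ^ 2 * ((N : ℝ) - 1 + K * p * (η l)))
      = ∑ η ∈ Finset.Nat.antidiagonalTuple K N,
        cgWeight K N p η * (((N : ℝ) - 1 + K * p * (η k)) * (η l : ℝ) * ((η k : ℝ) + 1)) := by
  have hL : ∑ η ∈ (Finset.Nat.antidiagonalTuple K N).filter (fun η => η k ≠ 0),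
      cgWeight K N p η * (((η k : ℝ)) ^ 2 * ((N : ℝ) - 1 + K * p * (η l)))
      = ∑ η ∈ Finset.Nat.antidiagonalTuple K N,
      cgWeight K N p η * (((η k : ℝ)) ^ 2 * ((N : ℝ) - 1 + K * p * (η l))) := by
    apply Finset.sum_filter_of_ne
    intro η _ hne h0
    apply hne
    rw [h0]
    simp
  have hR : ∑ η ∈ (Finset.Nat.antidiagonalTuple K N).filter (fun η => η l ≠ 0),
      cgWeight K N p η * (((N : ℝ) - 1 + K * p * (η k)) * (η l : ℝ) * ((η k : ℝ) + 1))
      = ∑ η ∈ Finset.Nat.antidiagonalTuple K N,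
      cgWeight K N p η * (((N : ℝ) - 1 + K * p * (η k)) * (η l : ℝ) * ((η k : ℝ) + 1)) := by
    apply Finset.sum_filter_of_ne
    intro η _ hne h0
    apply hne
    rw [h0]
    simp
  rw [← hL, ← hR]
  apply Finset.sum_nbij'
    (i := fun η => Function.update (Function.update η k (η k - 1)) l (η l + 1))
    (j := fun η => Function.update (Function.update η l (η l - 1)) k (η k + 1))
  · intro η hη
    rw [Finset.mem_filter, Finset.Nat.mem_antidiagonalTuple] at hη
    rw [Finset.mem_filter, Finset.Nat.mem_antidiagonalTuple]
    refine ⟨?_, ?_⟩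
    · have h2 := sum_update_update hkl η (η k - 1) (η l + 1)
      omega
    · rw [Function.update_self]
      omega
  · intro η hη
    rw [Finset.mem_filter, Finset.Nat.mem_antidiagonalTuple] at hη
    rw [Finset.mem_filter, Finset.Nat.mem_antidiagonalTuple]
    refine ⟨?_, ?_⟩
    · have h2 := sum_update_update hkl.symm η (η l - 1) (η k + 1)
      omega
    · rw [Function.update_self]
      omega
  · intro η hη
    rw [Finset.mem_filter] at hη
    funext i
    by_cases hik : i = k
    · subst hik
      rw [Function.update_self, Function.update_of_ne hkl, Function.update_self]
      omega
    · by_cases hil : i = l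
      · subst hil
        rw [Function.update_of_ne (Ne.symm hkl), Function.update_self,
          Function.update_self]
        omega
      · rw [Function.update_of_ne hik, Function.update_of_ne hil,
          Function.update_of_ne hil, Function.update_of_ne hik]
  · intro η hη
    rw [Finset.mem_filter] at hη
    funext i
    by_cases hil : i = l
    · subst hil
      rw [Function.update_self, Function.update_of_ne (Ne.symm hkl), Function.update_self]
      omega
    · by_cases hik : i = k
      · subst hik
        rw [Function.update_of_ne hkl, Function.update_self, Function.update_self]
        omega
      · rw [Function.update_of_ne hil, Function.update_of_ne hik,
          Function.update_of_ne hik, Function.update_of_ne hil]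
  · intro η hη
    rw [Finset.mem_filter] at hη
    exact key_term hN hp hkl η hη.2
lemma moment_eq (hN : 2 ≤ N) (hp : 0 < p) {k l : Fin K} (hkl : k ≠ l) :
    ((N:ℝ)-1) * (∑ η ∈ Finset.Nat.antidiagonalTuple K N, cgWeight K N p η * ((η k:ℝ))^2)
      = ((N:ℝ)-1+K*p) *
          (∑ η ∈ Finset.Nat.antidiagonalTuple K N, cgWeight K N p η * ((η k:ℝ)*(η l:ℝ)))
        + ((N:ℝ)-1) * (∑ η ∈ Finset.Nat.antidiagonalTuple K N, cgWeight K N p η * (η l:ℝ)) := by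
  have h := key_sum hN hp hkl
  have eL : ∑ η ∈ Finset.Nat.antidiagonalTuple K N,
      cgWeight K N p η * (((η k : ℝ)) ^ 2 * ((N : ℝ) - 1 + K * p * (η l)))
      = ((N:ℝ)-1) * (∑ η ∈ Finset.Nat.antidiagonalTuple K N, cgWeight K N p η * ((η k:ℝ))^2)
        + (K*p) * (∑ η ∈ Finset.Nat.antidiagonalTuple K N,
            cgWeight K N p η * (((η k:ℝ))^2 * (η l:ℝ))) := by
    rw [Finset.mul_sum, Finset.mul_sum, ← Finset.sum_add_distrib]
    exact Finset.sum_congr rfl fun η _ => by ring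
  have eR : ∑ η ∈ Finset.Nat.antidiagonalTuple K N,
      cgWeight K N p η * (((N : ℝ) - 1 + K * p * (η k)) * (η l : ℝ) * ((η k : ℝ) + 1))
      = ((N:ℝ)-1) * (∑ η ∈ Finset.Nat.antidiagonalTuple K N,
            cgWeight K N p η * ((η k:ℝ)*(η l:ℝ)))
        + ((N:ℝ)-1) * (∑ η ∈ Finset.Nat.antidiagonalTuple K N, cgWeight K N p η * (η l:ℝ))
        + (K*p) * (∑ η ∈ Finset.Nat.antidiagonalTuple K N,
            cgWeight K N p η * (((η k:ℝ))^2 * (η l:ℝ)))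
        + (K*p) * (∑ η ∈ Finset.Nat.antidiagonalTuple K N,
            cgWeight K N p η * ((η k:ℝ)*(η l:ℝ))) := by
    rw [Finset.mul_sum, Finset.mul_sum, Finset.mul_sum, Finset.mul_sum,
      ← Finset.sum_add_distrib, ← Finset.sum_add_distrib, ← Finset.sum_add_distrib]
    exact Finset.sum_congr rfl fun η _ => by ring
  rw [eL, eR] at h
  linarith

lemma S1_eq (k : Fin K) :
    (K:ℝ) * (∑ η ∈ Finset.Nat.antidiagonalTuple K N, cgWeight K N p η * (η k:ℝ))
      = N * ∑ η ∈ Finset.Nat.antidiagonalTuple K N, cgWeight K N p η := by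
  have htot : ∑ k' : Fin K, ∑ η ∈ Finset.Nat.antidiagonalTuple K N,
      cgWeight K N p η * (η k':ℝ)
      = N * ∑ η ∈ Finset.Nat.antidiagonalTuple K N, cgWeight K N p η := by
    rw [Finset.sum_comm]
    have h1 : ∀ η ∈ Finset.Nat.antidiagonalTuple K N,
        ∑ k' : Fin K, cgWeight K N p η * (η k':ℝ) = cgWeight K N p η * N := by
      intro η hη
      rw [← Finset.mul_sum]
      congr 1
      rw [← Nat.cast_sum, Finset.Nat.mem_antidiagonalTuple.mp hη]
    rw [Finset.sum_congr rfl h1, ← Finset.sum_mul]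
    ring
  have hsym : ∀ k' : Fin K, ∑ η ∈ Finset.Nat.antidiagonalTuple K N,
      cgWeight K N p η * (η k':ℝ)
      = ∑ η ∈ Finset.Nat.antidiagonalTuple K N, cgWeight K N p η * (η k:ℝ) :=
    fun k' => sum_single_swap (fun n => (n:ℝ)) k' k
  rw [← htot, Finset.sum_congr rfl (fun k' _ => hsym k'), Finset.sum_const,
    Finset.card_univ, Fintype.card_fin, nsmul_eq_mul]

lemma Skl_tot (k : Fin K) :
    ∑ l : Fin K, ∑ η ∈ Finset.Nat.antidiagonalTuple K N,
        cgWeight K N p η * ((η k:ℝ)*(η l:ℝ))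
      = N * ∑ η ∈ Finset.Nat.antidiagonalTuple K N, cgWeight K N p η * (η k:ℝ) := by
  rw [Finset.sum_comm]
  have h1 : ∀ η ∈ Finset.Nat.antidiagonalTuple K N,
      ∑ l : Fin K, cgWeight K N p η * ((η k:ℝ)*(η l:ℝ))
        = (cgWeight K N p η * (η k:ℝ)) * N := by
    intro η hη
    have : ∀ l : Fin K, cgWeight K N p η * ((η k:ℝ)*(η l:ℝ))
        = (cgWeight K N p η * (η k:ℝ)) * (η l:ℝ) := fun l => by ring
    rw [Finset.sum_congr rfl (fun l _ => this l), ← Finset.mul_sum]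
    congr 1
    rw [← Nat.cast_sum, Finset.Nat.mem_antidiagonalTuple.mp hη]
  rw [Finset.sum_congr rfl h1, ← Finset.sum_mul, Finset.sum_mul]
  rw [Finset.mul_sum]
  exact Finset.sum_congr rfl fun η _ => by ring
lemma S2_bound (hN : 2 ≤ N) (hp : 0 < p) (hK2 : 2 ≤ K) (k : Fin K) :
    (K:ℝ)^2 * (∑ η ∈ Finset.Nat.antidiagonalTuple K N, cgWeight K N p η * ((η k:ℝ))^2)
      ≤ (N:ℝ) * ((N:ℝ) + ((K:ℝ)-1)*(p+1)) *
          ∑ η ∈ Finset.Nat.antidiagonalTuple K N, cgWeight K N p η := by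
  set A := Finset.Nat.antidiagonalTuple K N with hA
  set Z := ∑ η ∈ A, cgWeight K N p η with hZ
  set S1 := ∑ η ∈ A, cgWeight K N p η * (η k:ℝ) with hS1def
  set S2 := ∑ η ∈ A, cgWeight K N p η * ((η k:ℝ))^2 with hS2def
  set M := (N:ℝ) - 1 with hM
  set C := (K:ℝ) - 1 with hCdef
  have hkmem : k ∈ (Finset.univ : Finset (Fin K)) := Finset.mem_univ k
  -- sum the moment identity over l ≠ k
  have hE : ∀ l ∈ Finset.univ.erase k,
      M * S2 = (M + K*p) * (∑ η ∈ A, cgWeight K N p η * ((η k:ℝ)*(η l:ℝ)))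
        + M * (∑ η ∈ A, cgWeight K N p η * (η l:ℝ)) := by
    intro l hl
    exact moment_eq hN hp ((Finset.mem_erase.mp hl).1.symm)
  have hsum := Finset.sum_congr rfl hE
  rw [Finset.sum_const, Finset.card_erase_of_mem hkmem, Finset.card_univ,
    Fintype.card_fin, Finset.sum_add_distrib, ← Finset.mul_sum, ← Finset.mul_sum] at hsum
  -- the erased sums
  have h1 : ∑ l ∈ Finset.univ.erase k, (∑ η ∈ A, cgWeight K N p η * ((η k:ℝ)*(η l:ℝ)))
      = (N:ℝ) * S1 - S2 := by
    rw [Finset.sum_erase_eq_sub hkmem, Skl_tot k]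
    congr 1
    exact Finset.sum_congr rfl fun η _ => by ring
  have h2 : ∑ l ∈ Finset.univ.erase k, (∑ η ∈ A, cgWeight K N p η * (η l:ℝ))
      = (K - 1 : ℕ) • S1 := by
    rw [Finset.sum_congr rfl (fun l _ => sum_single_swap (fun n => (n:ℝ)) l k),
      Finset.sum_const, Finset.card_erase_of_mem hkmem, Finset.card_univ, Fintype.card_fin]
  rw [h1, h2] at hsum
  have hCcast : ((K - 1 : ℕ) : ℝ) = C := by
    rw [hCdef]; push_cast [Nat.cast_sub (le_trans one_le_two hK2)]; ring
  rw [nsmul_eq_mul, nsmul_eq_mul, hCcast] at hsum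
  -- hsum : C * (M * S2) = (M + K*p) * (N*S1 - S2) + M * (C * S1)
  have hS1eq : (K:ℝ) * S1 = N * Z := S1_eq k
  have hEkey : (K:ℝ) * S2 * (C*M + M + K*p) = (N:ℝ)*Z*((M + K*p)*N + M*C) := by
    linear_combination (K:ℝ) * hsum + ((M + K*p)*(N:ℝ) + M*C) * hS1eq
  have hZnn : 0 ≤ Z := Finset.sum_nonneg fun η _ => (cgWeight_pos hN hp η).le
  have hfac : (0:ℝ) < C*M + M + K*p := by
    have hN' : (2:ℝ) ≤ N := by exact_mod_cast hN
    have hK' : (2:ℝ) ≤ K := by exact_mod_cast hK2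
    have : 0 < (K:ℝ)*p := by positivity
    nlinarith
  apply le_of_mul_le_mul_right _ hfac
  have hid : (N:ℝ) * ((N:ℝ) + C*(p+1)) * Z * (C*M + M + K*p)
      - (K:ℝ) * ((N:ℝ)*Z*((M + K*p)*N + M*C))
      = ((N:ℝ)*Z) * ((K:ℝ)*C*p^2) := by
    rw [hM, hCdef]; ring
  have hNnn : (0:ℝ) ≤ N := Nat.cast_nonneg N
  have hCnn : (0:ℝ) ≤ C := by
    rw [hCdef]
    have : (2:ℝ) ≤ K := by exact_mod_cast hK2
    linarith
  have hrhs_nn : 0 ≤ ((N:ℝ)*Z) * ((K:ℝ)*C*p^2) := by positivity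
  calc (K:ℝ)^2 * S2 * (C*M + M + K*p)
      = (K:ℝ) * ((K:ℝ) * S2 * (C*M + M + K*p)) := by ring
    _ = (K:ℝ) * ((N:ℝ)*Z*((M + K*p)*N + M*C)) := by rw [hEkey]
    _ ≤ (N:ℝ) * ((N:ℝ) + C*(p+1)) * Z * (C*M + M + K*p) := by linarith [hid, hrhs_nn]
/-- Under the invariant measure `ν_N` of the complete graph Fleming-Viot process,
`E_{ν_N}[d_TV(m(η), π_K)] ≤ √(K(p+1)/N)`, where `π_K` is uniform on the `K` sites. -/
theorem stmt_14 (K N : ℕ) (hK : 1 ≤ K) (hN : 2 ≤ N) (p : ℝ) (hp : 0 < p) :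
    cgExp K N p (fun η => (1 / 2) * ∑ k, |(η k : ℝ) / N - 1 / (K : ℝ)|) ≤
      Real.sqrt ((K : ℝ) * (p + 1) / N) := by
  have hN0 : (N:ℝ) ≠ 0 := by positivity
  have hK0 : (K:ℝ) ≠ 0 := by
    have : (1:ℝ) ≤ K := by exact_mod_cast hK
    positivity
  have hZpos : 0 < ∑ η ∈ Finset.Nat.antidiagonalTuple K N, cgWeight K N p η := by
    apply Finset.sum_pos (fun η _ => cgWeight_pos hN hp η)
    refine ⟨fun i => if i = (⟨0, by omega⟩ : Fin K) then N else 0, ?_⟩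
    rw [Finset.Nat.mem_antidiagonalTuple]
    simp
  rcases Nat.lt_or_ge K 2 with hK1 | hK2
  · -- K = 1
    have hK1' : K = 1 := by omega
    subst hK1'
    have hnum : ∑ η ∈ Finset.Nat.antidiagonalTuple 1 N,
        cgWeight 1 N p η * ((1 / 2) * ∑ k, |(η k : ℝ) / N - 1 / ((1:ℕ) : ℝ)|) = 0 := by
      apply Finset.sum_eq_zero
      intro η hη
      rw [Finset.Nat.mem_antidiagonalTuple, Fin.sum_univ_one] at hη
      rw [Fin.sum_univ_one, hη]
      rw [div_self hN0]
      norm_num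
    rw [cgExp, hnum, zero_div]
    exact Real.sqrt_nonneg _
  · -- main case 2 ≤ K
    set A := Finset.Nat.antidiagonalTuple K N with hA
    set Z := ∑ η ∈ A, cgWeight K N p η with hZ
    set C := (K:ℝ) - 1 with hCdef
    have hCnn : 0 ≤ C := by
      have : (2:ℝ) ≤ K := by exact_mod_cast hK2
      rw [hCdef]; linarith
    set y0 := C * (p+1) / ((N:ℝ) * (K:ℝ)^2) with hy0def
    have hy0nn : 0 ≤ y0 := by positivity
    -- variance bound for each coordinate
    have hVb : ∀ k : Fin K,
        (∑ η ∈ A, cgWeight K N p η * ((η k:ℝ)/N - 1/(K:ℝ))^2) ≤ y0 * Z := by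
      intro k
      set S1 := ∑ η ∈ A, cgWeight K N p η * (η k:ℝ) with hS1def
      set S2 := ∑ η ∈ A, cgWeight K N p η * ((η k:ℝ))^2 with hS2def
      set V := ∑ η ∈ A, cgWeight K N p η * ((η k:ℝ)/N - 1/(K:ℝ))^2 with hVdef
      have hVscaled : V * ((N:ℝ)*(K:ℝ))^2
          = ∑ η ∈ A, cgWeight K N p η * ((K:ℝ)*(η k:ℝ) - N)^2 := by
        rw [hVdef, Finset.sum_mul]
        apply Finset.sum_congr rfl
        intro η _
        have : ((η k:ℝ)/N - 1/(K:ℝ))^2 * ((N:ℝ)*(K:ℝ))^2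
            = ((K:ℝ)*(η k:ℝ) - N)^2 := by
          field_simp
        calc cgWeight K N p η * ((η k:ℝ)/N - 1/(K:ℝ))^2 * ((N:ℝ)*(K:ℝ))^2
            = cgWeight K N p η * (((η k:ℝ)/N - 1/(K:ℝ))^2 * ((N:ℝ)*(K:ℝ))^2) := by ring
          _ = cgWeight K N p η * ((K:ℝ)*(η k:ℝ) - N)^2 := by rw [this]
      have hV' : ∑ η ∈ A, cgWeight K N p η * ((K:ℝ)*(η k:ℝ) - N)^2
          = (K:ℝ)^2 * S2 - 2*(N:ℝ)*(K:ℝ)*S1 + (N:ℝ)^2*Z := by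
        rw [hS2def, hS1def, hZ, Finset.mul_sum, Finset.mul_sum, Finset.mul_sum,
          ← Finset.sum_sub_distrib, ← Finset.sum_add_distrib]
        apply Finset.sum_congr rfl
        intro η _
        ring
      have hS2b := S2_bound hN hp hK2 k
      have hS1eq : (K:ℝ) * S1 = N * Z := S1_eq k
      have h2NK : 2*(N:ℝ)*((K:ℝ)*S1) = 2*(N:ℝ)*((N:ℝ)*Z) := by rw [hS1eq]
      have hV'b : ∑ η ∈ A, cgWeight K N p η * ((K:ℝ)*(η k:ℝ) - N)^2
          ≤ C*(p+1)*(N:ℝ)*Z := by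
        rw [hV']
        rw [hCdef]
        nlinarith [hS2b, h2NK]
      have hy0Z : y0 * Z * ((N:ℝ)*(K:ℝ))^2 = C*(p+1)*(N:ℝ)*Z := by
        rw [hy0def]
        field_simp
      have hposNK : (0:ℝ) < ((N:ℝ)*(K:ℝ))^2 := by
        have h1 : (0:ℝ) < N := by positivity
        have h2 : (0:ℝ) < K := by
          have : (2:ℝ) ≤ K := by exact_mod_cast hK2
          linarith
        positivity
      apply le_of_mul_le_mul_right _ hposNK
      rw [hVscaled, hy0Z]
      exact hV'b
    -- Cauchy-Schwarz for each coordinate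
    have hCS : ∀ k : Fin K,
        (∑ η ∈ A, cgWeight K N p η * |(η k:ℝ)/N - 1/(K:ℝ)|) ≤ Z * Real.sqrt y0 := by
      intro k
      set Sabs := ∑ η ∈ A, cgWeight K N p η * |(η k:ℝ)/N - 1/(K:ℝ)| with hSabsdef
      have hwnn : ∀ η, 0 ≤ cgWeight K N p η := fun η => (cgWeight_pos hN hp η).le
      have hcs := Finset.sum_mul_sq_le_sq_mul_sq A
        (fun η => Real.sqrt (cgWeight K N p η))
        (fun η => Real.sqrt (cgWeight K N p η) * |(η k:ℝ)/N - 1/(K:ℝ)|)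
      have e1 : ∑ η ∈ A, (Real.sqrt (cgWeight K N p η) *
          (Real.sqrt (cgWeight K N p η) * |(η k:ℝ)/N - 1/(K:ℝ)|)) = Sabs := by
        apply Finset.sum_congr rfl
        intro η _
        rw [← mul_assoc, Real.mul_self_sqrt (hwnn η)]
      have e2 : ∑ η ∈ A, (Real.sqrt (cgWeight K N p η))^2 = Z := by
        apply Finset.sum_congr rfl
        intro η _
        rw [Real.sq_sqrt (hwnn η)]
      have e3 : ∑ η ∈ A, (Real.sqrt (cgWeight K N p η) * |(η k:ℝ)/N - 1/(K:ℝ)|)^2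
          = ∑ η ∈ A, cgWeight K N p η * ((η k:ℝ)/N - 1/(K:ℝ))^2 := by
        apply Finset.sum_congr rfl
        intro η _
        rw [mul_pow, Real.sq_sqrt (hwnn η), sq_abs]
      rw [e1, e2, e3] at hcs
      have hSabsnn : 0 ≤ Sabs :=
        Finset.sum_nonneg fun η _ => mul_nonneg (hwnn η) (abs_nonneg _)
      have hsq : Sabs^2 ≤ Z * (y0 * Z) :=
        le_trans hcs (mul_le_mul_of_nonneg_left (hVb k) hZpos.le)
      have : Sabs ≤ Real.sqrt (Z * (y0 * Z)) := by
        rw [← Real.sqrt_sq hSabsnn]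
        exact Real.sqrt_le_sqrt hsq
      calc Sabs ≤ Real.sqrt (Z * (y0 * Z)) := this
        _ = Z * Real.sqrt y0 := by
            rw [show Z * (y0 * Z) = Z^2 * y0 by ring, Real.sqrt_mul (sq_nonneg Z),
              Real.sqrt_sq hZpos.le]
    -- assemble
    rw [cgExp, div_le_iff₀ hZpos]
    have hnum : ∑ η ∈ A, cgWeight K N p η * ((1/2) * ∑ k, |(η k:ℝ)/N - 1/(K:ℝ)|)
        = (1/2) * ∑ k : Fin K, ∑ η ∈ A, cgWeight K N p η * |(η k:ℝ)/N - 1/(K:ℝ)| := by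
      calc ∑ η ∈ A, cgWeight K N p η * ((1/2) * ∑ k, |(η k:ℝ)/N - 1/(K:ℝ)|)
          = ∑ η ∈ A, ∑ k : Fin K, cgWeight K N p η * ((1/2) * |(η k:ℝ)/N - 1/(K:ℝ)|) :=
            Finset.sum_congr rfl fun η _ => by rw [Finset.mul_sum, Finset.mul_sum]
        _ = ∑ k : Fin K, ∑ η ∈ A, cgWeight K N p η * ((1/2) * |(η k:ℝ)/N - 1/(K:ℝ)|) :=
            Finset.sum_comm
        _ = ∑ k : Fin K, (1/2) * ∑ η ∈ A, cgWeight K N p η * |(η k:ℝ)/N - 1/(K:ℝ)| :=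
            Finset.sum_congr rfl fun k _ => by
              rw [Finset.mul_sum]
              exact Finset.sum_congr rfl fun η _ => by ring
        _ = (1/2) * ∑ k : Fin K, ∑ η ∈ A, cgWeight K N p η * |(η k:ℝ)/N - 1/(K:ℝ)| :=
            (Finset.mul_sum _ _ _).symm
    rw [hnum]
    have hsum_le : ∑ k : Fin K, ∑ η ∈ A, cgWeight K N p η * |(η k:ℝ)/N - 1/(K:ℝ)|
        ≤ (K:ℝ) * (Z * Real.sqrt y0) := by
      calc ∑ k : Fin K, ∑ η ∈ A, cgWeight K N p η * |(η k:ℝ)/N - 1/(K:ℝ)|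
          ≤ ∑ _k : Fin K, Z * Real.sqrt y0 := Finset.sum_le_sum fun k _ => hCS k
        _ = (K:ℝ) * (Z * Real.sqrt y0) := by
            rw [Finset.sum_const, Finset.card_univ, Fintype.card_fin, nsmul_eq_mul]
    have hscalar : (1/2) * (K:ℝ) * Real.sqrt y0 ≤ Real.sqrt ((K:ℝ)*(p+1)/N) := by
      have hKpos : (0:ℝ) < K := by
        have : (2:ℝ) ≤ K := by exact_mod_cast hK2
        linarith
      have htnn : 0 ≤ (K:ℝ)*(p+1)/N := by positivity
      rw [Real.le_sqrt (by positivity) htnn]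
      have hLHS : ((1/2) * (K:ℝ) * Real.sqrt y0)^2 = 1/4 * (K:ℝ)^2 * y0 := by
        rw [mul_pow, mul_pow, Real.sq_sqrt hy0nn]
        ring
      rw [hLHS, hy0def]
      have hKpos2 : (0:ℝ) < (K:ℝ)^2 := by positivity
      have hNpos : (0:ℝ) < N := by positivity
      have hLHS2 : 1/4*(K:ℝ)^2*(C*(p+1)/((N:ℝ)*(K:ℝ)^2)) = C*(p+1)/(4*(N:ℝ)) := by
        field_simp
      rw [hLHS2, div_le_div_iff₀ (by positivity) (by positivity)]
      have hCK : C ≤ (K:ℝ) := by rw [hCdef]; linarith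
      nlinarith [mul_nonneg (mul_nonneg hKpos.le (by linarith : (0:ℝ) ≤ p+1)) hNpos.le]
    calc (1/2) * ∑ k : Fin K, ∑ η ∈ A, cgWeight K N p η * |(η k:ℝ)/N - 1/(K:ℝ)|
        ≤ (1/2) * ((K:ℝ) * (Z * Real.sqrt y0)) := by linarith [hsum_le]
      _ = ((1/2) * (K:ℝ) * Real.sqrt y0) * Z := by ring
      _ ≤ Real.sqrt ((K:ℝ)*(p+1)/N) * Z :=
          mul_le_mul_of_nonneg_right hscalar hZpos.le
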